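/- arXiv:1108.2334 — 4 statements merged into one kernel-verified Lean document; each statement's English description precedes it below -/
import Mathlib

section
/- Suppose for every t, the conditional distribution of (x_{t+1}, ..., x_m) given (y_t, x_t) equals its conditional distribution given x_t alone (conditional independence of future covariates from the current response given the current covariate). Then the type II condition holds: E{∂_β μ_is(β)[y_ij − μ_ij(β)]} = 0 for all s ≥ j, where μ_ij(β) = E[y_ij | x_ij] and ∂_β μ_is(β) is a function of x_is only. -/
open MeasureTheory ProbabilityTheory

section Aux
open Filter
variable {Ω : Type*} {m' G m₂ : MeasurableSpace Ω} {mΩ : MeasurableSpace Ω}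
  [StandardBorelSpace Ω] {P : Measure Ω} [IsProbabilityMeasure P]

lemma exists_simple_approx {Ω' : Type*} {m : MeasurableSpace Ω'} {Q : Measure Ω'}
    {y : Ω' → ℝ} (hy : Integrable y Q) (hym : Measurable y) :
    ∃ φ : ℕ → SimpleFunc Ω' ℝ,
      Tendsto (fun n => ∫⁻ x, ‖(φ n) x - y x‖₊ ∂Q) atTop (nhds 0) :=
  ⟨fun n => SimpleFunc.approxOn y hym (Set.range y ∪ {0}) 0 (by simp) n,
    SimpleFunc.tendsto_approxOn_range_L1_enorm hym hy⟩

lemma aux_factor (hm' : m' ≤ mΩ) (hG : G ≤ mΩ) (hσ : m₂ ≤ mΩ)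
    {y : Ω → ℝ} (hy : Integrable y P) (ymσ : Measurable[m₂] y)
    (hCI : CondIndep m' G m₂ hm' P)
    {C : Set Ω} (hC : MeasurableSet[G] C) :
    P[fun ω => C.indicator (fun _ => (1:ℝ)) ω * y ω | m']
      =ᵐ[P] fun ω => (P[C.indicator (fun _ => (1:ℝ)) | m']) ω * (P[y | m']) ω := by
  classical
  have hCI' := (ProbabilityTheory.condIndep_iff m' G m₂ hm' hG hσ P).mp hCI
  have hCmeas : MeasurableSet[mΩ] C := hG C hC
  have hCind_int : Integrable (C.indicator (fun _ => (1:ℝ))) P :=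
    (integrable_const 1).indicator hCmeas
  have hCbdd : ∀ ω, ‖C.indicator (fun _ => (1:ℝ)) ω‖ ≤ 1 := by
    intro ω; by_cases h : ω ∈ C <;> simp [Set.indicator_apply, h]
  -- Step 1: factorization for m₂-simple functions
  have hQ : ∀ φ : @SimpleFunc Ω m₂ ℝ, Integrable φ P ∧
      P[fun ω => C.indicator (fun _ => (1:ℝ)) ω * φ ω | m']
        =ᵐ[P] fun ω => (P[C.indicator (fun _ => (1:ℝ)) | m']) ω * (P[⇑φ | m']) ω := by
    intro φ
    refine @SimpleFunc.induction Ω ℝ m₂ _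
      (fun ψ => Integrable ⇑ψ P ∧
        P[fun ω => C.indicator (fun _ => (1:ℝ)) ω * ψ ω | m']
          =ᵐ[P] fun ω => (P[C.indicator (fun _ => (1:ℝ)) | m']) ω * (P[⇑ψ | m']) ω)
      ?_ ?_ φ
    · intro c D hD
      have hDm : MeasurableSet[mΩ] D := hσ D hD
      simp only [SimpleFunc.coe_piecewise, SimpleFunc.coe_const, SimpleFunc.coe_zero,
        Set.piecewise_eq_indicator]
      have hcoe : D.piecewise (Function.const Ω c) (Function.const Ω 0)
          = fun ω => c • D.indicator (fun _ => (1:ℝ)) ω := by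
        funext ω; by_cases h : ω ∈ D <;> simp [Set.piecewise, Set.indicator_apply, h]
      rw [hcoe]
      have e2 : (fun ω => c • D.indicator (fun _ => (1:ℝ)) ω)
          = c • (D.indicator (fun _ => (1:ℝ))) := rfl
      constructor
      · rw [e2]; exact ((integrable_const (1:ℝ)).indicator hDm).smul c
      · have h1 : (fun ω => C.indicator (fun _ => (1:ℝ)) ω * (c • D.indicator (fun _ => (1:ℝ)) ω))
            = c • ((C ∩ D).indicator (fun _ => (1:ℝ))) := by
          funext ω
          by_cases hc : ω ∈ C <;> by_cases hd : ω ∈ D <;>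
            simp [Set.indicator_apply, hc, hd, Set.mem_inter_iff]
        rw [h1, e2]
        have hsmul1 := condExp_smul (μ := P) (m := m') c ((C ∩ D).indicator (fun _ => (1:ℝ)))
        have hsmul2 := condExp_smul (μ := P) (m := m') c (D.indicator (fun _ => (1:ℝ)))
        have hfac := hCI' C D hC hD
        filter_upwards [hsmul1, hsmul2, hfac] with ω hω1 hω2 hω3
        rw [hω1, hω2]
        simp only [Pi.smul_apply, smul_eq_mul, Pi.mul_apply] at *
        rw [hω3]
        ring
    · intro ψ₁ ψ₂ _ h₁ h₂
      obtain ⟨hi₁, he₁⟩ := h₁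
      obtain ⟨hi₂, he₂⟩ := h₂
      have hint₁ : Integrable (fun ω => C.indicator (fun _ => (1:ℝ)) ω * ψ₁ ω) P :=
        hi₁.bdd_mul hCind_int.aestronglyMeasurable (Eventually.of_forall hCbdd)
      have hint₂ : Integrable (fun ω => C.indicator (fun _ => (1:ℝ)) ω * ψ₂ ω) P :=
        hi₂.bdd_mul hCind_int.aestronglyMeasurable (Eventually.of_forall hCbdd)
      refine ⟨hi₁.add hi₂, ?_⟩
      have hsplit : (fun ω => C.indicator (fun _ => (1:ℝ)) ω * (ψ₁ + ψ₂) ω)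
          = (fun ω => C.indicator (fun _ => (1:ℝ)) ω * ψ₁ ω)
            + (fun ω => C.indicator (fun _ => (1:ℝ)) ω * ψ₂ ω) := by
        funext ω; simp only [Pi.add_apply, SimpleFunc.coe_add]; ring
      rw [hsplit]
      have hcoe : ⇑(ψ₁ + ψ₂) = ⇑ψ₁ + ⇑ψ₂ := by simp [SimpleFunc.coe_add]
      rw [hcoe]
      have hadd := condExp_add (μ := P) (m := m') hint₁ hint₂
      have hadd2 := condExp_add (μ := P) (m := m') hi₁ hi₂
      filter_upwards [hadd, hadd2, he₁, he₂] with ω hω1 hω2 hω3 hω4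
      simp only [Pi.add_apply] at hω1 hω2 ⊢
      rw [hω1, hω2, hω3, hω4]; ring
  -- Step 2: approximation
  have yint_trim : Integrable y (P.trim hσ) := hy.trim hσ ymσ.stronglyMeasurable
  obtain ⟨φ, hφ0⟩ := exists_simple_approx (m := m₂) yint_trim ymσ
  have hd : Tendsto (fun n => eLpNorm (⇑(φ n) - y) 1 P) atTop (nhds 0) := by
    have heq : ∀ n, (∫⁻ x, ‖(φ n) x - y x‖₊ ∂(P.trim hσ)) = eLpNorm (⇑(φ n) - y) 1 P := by
      intro n
      rw [eLpNorm_one_eq_lintegral_enorm, lintegral_trim hσ]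
      · rfl
      · have h1 : Measurable[m₂] (⇑(φ n) - y) := Measurable.sub (@SimpleFunc.measurable Ω ℝ m₂ _ (φ n)) ymσ
        exact measurable_coe_nnreal_ennreal.comp (measurable_nnnorm.comp h1)
    simp only [heq] at hφ0
    exact hφ0
  -- Step 3: pass to the limit
  have hFint : Integrable (fun ω => C.indicator (fun _ => (1:ℝ)) ω * y ω) P :=
    hy.bdd_mul hCind_int.aestronglyMeasurable (Eventually.of_forall hCbdd)
  have hFnint : ∀ n, Integrable (fun ω => C.indicator (fun _ => (1:ℝ)) ω * (φ n) ω) P :=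
    fun n => (hQ (φ n)).1.bdd_mul hCind_int.aestronglyMeasurable (Eventually.of_forall hCbdd)
  have hmeas_a : AEStronglyMeasurable (P[fun ω => C.indicator (fun _ => (1:ℝ)) ω * y ω | m']) P :=
    (stronglyMeasurable_condExp.mono hm').aestronglyMeasurable
  have hmeas_an : ∀ n, AEStronglyMeasurable
      (P[fun ω => C.indicator (fun _ => (1:ℝ)) ω * (φ n) ω | m']) P :=
    fun _ => (stronglyMeasurable_condExp.mono hm').aestronglyMeasurable
  have hmeas_e : AEStronglyMeasurable (P[C.indicator (fun _ => (1:ℝ)) | m']) P :=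
    (stronglyMeasurable_condExp.mono hm').aestronglyMeasurable
  have hmeas_y' : AEStronglyMeasurable (P[y | m']) P :=
    (stronglyMeasurable_condExp.mono hm').aestronglyMeasurable
  have hebdd : ∀ᵐ ω ∂P, |(P[C.indicator (fun _ => (1:ℝ)) | m']) ω| ≤ 1 := by
    have h0 : (0 : Ω → ℝ) ≤ᵐ[P] P[C.indicator (fun _ => (1:ℝ)) | m'] :=
      condExp_nonneg (Eventually.of_forall fun ω =>
        Set.indicator_nonneg (fun _ _ => zero_le_one) ω)
    have h1 : P[C.indicator (fun _ => (1:ℝ)) | m'] ≤ᵐ[P] P[(fun _ : Ω => (1:ℝ)) | m'] :=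
      condExp_mono hCind_int (integrable_const 1)
        (Eventually.of_forall fun ω => by
          by_cases h : ω ∈ C <;> simp [Set.indicator_apply, h])
    have h2 := condExp_const (μ := P) hm' (1:ℝ)
    filter_upwards [h0, h1] with ω hω0 hω1
    rw [h2] at hω1
    have h0' : (0:ℝ) ≤ (P[C.indicator (fun _ => (1:ℝ)) | m']) ω := by simpa using hω0
    exact abs_le.mpr ⟨by linarith, hω1⟩
  have key : ∀ n : ℕ,
      eLpNorm ((P[fun ω => C.indicator (fun _ => (1:ℝ)) ω * y ω | m'])
        - fun ω => (P[C.indicator (fun _ => (1:ℝ)) | m']) ω * (P[y | m']) ω) 1 P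
      ≤ eLpNorm (⇑(φ n) - y) 1 P + eLpNorm (⇑(φ n) - y) 1 P := by
    intro n
    obtain ⟨hφint, hφfac⟩ := hQ (φ n)
    have hA : eLpNorm ((P[fun ω => C.indicator (fun _ => (1:ℝ)) ω * y ω | m'])
        - P[fun ω => C.indicator (fun _ => (1:ℝ)) ω * (φ n) ω | m']) 1 P
        ≤ eLpNorm (⇑(φ n) - y) 1 P := by
      have hsub := condExp_sub (μ := P) (m := m') hFint (hFnint n)
      rw [eLpNorm_congr_ae hsub.symm]
      refine le_trans (eLpNorm_one_condExp_le_eLpNorm _) ?_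
      refine eLpNorm_mono (fun ω => ?_)
      simp only [Pi.sub_apply]
      have hh : C.indicator (fun _ => (1:ℝ)) ω * y ω - C.indicator (fun _ => (1:ℝ)) ω * (φ n) ω
          = C.indicator (fun _ => (1:ℝ)) ω * (y ω - (φ n) ω) := by ring
      rw [hh, norm_mul]
      calc ‖C.indicator (fun _ => (1:ℝ)) ω‖ * ‖y ω - (φ n) ω‖
          ≤ 1 * ‖y ω - (φ n) ω‖ :=
            mul_le_mul_of_nonneg_right (hCbdd ω) (norm_nonneg _)
        _ = ‖(φ n) ω - y ω‖ := by rw [one_mul, norm_sub_rev]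
    have hB : eLpNorm ((P[fun ω => C.indicator (fun _ => (1:ℝ)) ω * (φ n) ω | m'])
        - fun ω => (P[C.indicator (fun _ => (1:ℝ)) | m']) ω * (P[y | m']) ω) 1 P
        ≤ eLpNorm (⇑(φ n) - y) 1 P := by
      have hsub := condExp_sub (μ := P) (m := m') hφint hy
      have hcongr : (P[fun ω => C.indicator (fun _ => (1:ℝ)) ω * (φ n) ω | m'])
            - (fun ω => (P[C.indicator (fun _ => (1:ℝ)) | m']) ω * (P[y | m']) ω)
          =ᵐ[P] fun ω => (P[C.indicator (fun _ => (1:ℝ)) | m']) ω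
            * ((P[⇑(φ n) - y | m']) ω) := by
        filter_upwards [hφfac, hsub] with ω h1 h2
        simp only [Pi.sub_apply] at h1 h2 ⊢
        rw [h1, h2]
        ring
      rw [eLpNorm_congr_ae hcongr]
      refine le_trans ?_ (eLpNorm_one_condExp_le_eLpNorm (m := m') (⇑(φ n) - y))
      refine eLpNorm_mono_ae ?_
      filter_upwards [hebdd] with ω hω
      rw [norm_mul]
      calc ‖(P[C.indicator (fun _ => (1:ℝ)) | m']) ω‖ * ‖(P[⇑(φ n) - y | m']) ω‖
          ≤ 1 * ‖(P[⇑(φ n) - y | m']) ω‖ :=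
            mul_le_mul_of_nonneg_right (by simpa [Real.norm_eq_abs] using hω) (norm_nonneg _)
        _ = _ := one_mul _
    have hsplit : ((P[fun ω => C.indicator (fun _ => (1:ℝ)) ω * y ω | m'])
          - fun ω => (P[C.indicator (fun _ => (1:ℝ)) | m']) ω * (P[y | m']) ω)
        = ((P[fun ω => C.indicator (fun _ => (1:ℝ)) ω * y ω | m'])
            - P[fun ω => C.indicator (fun _ => (1:ℝ)) ω * (φ n) ω | m'])
          + ((P[fun ω => C.indicator (fun _ => (1:ℝ)) ω * (φ n) ω | m'])
            - fun ω => (P[C.indicator (fun _ => (1:ℝ)) | m']) ω * (P[y | m']) ω) :=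
      (sub_add_sub_cancel _ _ _).symm
    rw [hsplit]
    exact le_trans
      (eLpNorm_add_le (hmeas_a.sub (hmeas_an n))
        ((hmeas_an n).sub (hmeas_e.mul hmeas_y')) le_rfl)
      (add_le_add hA hB)
  have htend : Tendsto (fun n => eLpNorm (⇑(φ n) - y) 1 P + eLpNorm (⇑(φ n) - y) 1 P)
      atTop (nhds 0) := by simpa using hd.add hd
  have hz : eLpNorm ((P[fun ω => C.indicator (fun _ => (1:ℝ)) ω * y ω | m'])
      - fun ω => (P[C.indicator (fun _ => (1:ℝ)) | m']) ω * (P[y | m']) ω) 1 P = 0 :=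
    le_antisymm (ge_of_tendsto' htend key) zero_le
  have hae := (eLpNorm_eq_zero_iff (hmeas_a.sub (hmeas_e.mul hmeas_y')) one_ne_zero).mp hz
  filter_upwards [hae] with ω hω
  have : (P[fun ω => C.indicator (fun _ => (1:ℝ)) ω * y ω | m']) ω
      - (P[C.indicator (fun _ => (1:ℝ)) | m']) ω * (P[y | m']) ω = 0 := by
    simpa [Pi.sub_apply] using hω
  linarith [this]


lemma condexp_sup_of_condIndep (hm' : m' ≤ mΩ) (hG : G ≤ mΩ) (hσ : m₂ ≤ mΩ)
    {y : Ω → ℝ} (hy : Integrable y P) (ymσ : Measurable[m₂] y)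
    (hCI : CondIndep m' G m₂ hm' P) :
    P[y | m'] =ᵐ[P] P[y | m' ⊔ G] := by
  classical
  have hM : m' ⊔ G ≤ mΩ := sup_le hm' hG
  refine ae_eq_condExp_of_forall_setIntegral_eq hM hy
    (fun s _ _ => integrable_condExp.integrableOn) ?_
    ⟨P[y | m'], stronglyMeasurable_condExp.mono le_sup_left, EventuallyEq.rfl⟩
  intro A hA _
  revert hA
  have hgen : (m' ⊔ G) = MeasurableSpace.generateFrom
      {A : Set Ω | ∃ B C : Set Ω, MeasurableSet[m'] B ∧ MeasurableSet[G] C ∧ A = B ∩ C} := by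
    refine le_antisymm (sup_le ?_ ?_) (MeasurableSpace.generateFrom_le ?_)
    · intro s hs
      exact MeasurableSpace.measurableSet_generateFrom
        ⟨s, Set.univ, hs, MeasurableSet.univ, (Set.inter_univ s).symm⟩
    · intro s hs
      exact MeasurableSpace.measurableSet_generateFrom
        ⟨Set.univ, s, MeasurableSet.univ, hs, (Set.univ_inter s).symm⟩
    · rintro A ⟨B, C, hB, hC, rfl⟩
      have h1 : MeasurableSet[m' ⊔ G] B := (le_sup_left : m' ≤ m' ⊔ G) B hB
      have h2 : MeasurableSet[m' ⊔ G] C := (le_sup_right : G ≤ m' ⊔ G) C hC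
      exact h1.inter h2
  have hpi : IsPiSystem
      {A : Set Ω | ∃ B C : Set Ω, MeasurableSet[m'] B ∧ MeasurableSet[G] C ∧ A = B ∩ C} := by
    rintro A ⟨B₁, C₁, hB₁, hC₁, rfl⟩ A' ⟨B₂, C₂, hB₂, hC₂, rfl⟩ _
    exact ⟨B₁ ∩ B₂, C₁ ∩ C₂, hB₁.inter hB₂, hC₁.inter hC₂, Set.inter_inter_inter_comm _ _ _ _⟩
  refine MeasurableSpace.induction_on_inter (m := m' ⊔ G)
    (C := fun A _ => ∫ x in A, (P[y | m']) x ∂P = ∫ x in A, y x ∂P) hgen hpi ?_ ?_ ?_ ?_ A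
  · simp
  · rintro A ⟨B, C, hB, hC, rfl⟩
    have hCmeas : MeasurableSet[mΩ] C := hG C hC
    have hBmeas : MeasurableSet[mΩ] B := hm' B hB
    have hCind_int : Integrable (C.indicator (fun _ => (1:ℝ))) P :=
      (integrable_const 1).indicator hCmeas
    have hCbdd : ∀ ω, ‖C.indicator (fun _ => (1:ℝ)) ω‖ ≤ 1 := by
      intro ω; by_cases h : ω ∈ C <;> simp [Set.indicator_apply, h]
    have hind : ∀ g : Ω → ℝ, ∀ ω, C.indicator g ω = C.indicator (fun _ => (1:ℝ)) ω * g ω := by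
      intro g ω; by_cases h : ω ∈ C <;> simp [Set.indicator_apply, h]
    have hFint : Integrable (fun ω => C.indicator (fun _ => (1:ℝ)) ω * y ω) P :=
      hy.bdd_mul hCind_int.aestronglyMeasurable (Eventually.of_forall hCbdd)
    have hGint : Integrable ((P[y | m']) * C.indicator (fun _ => (1:ℝ))) P := by
      have := (integrable_condExp (μ := P) (m := m') (f := y)).bdd_mul
        hCind_int.aestronglyMeasurable (Eventually.of_forall hCbdd)
      exact this.congr (Eventually.of_forall fun ω => by simp [Pi.mul_apply, mul_comm])
    have hpull : P[(P[y | m']) * C.indicator (fun _ => (1:ℝ)) | m']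
        =ᵐ[P] (P[y | m']) * P[C.indicator (fun _ => (1:ℝ)) | m'] :=
      condExp_mul_of_stronglyMeasurable_left stronglyMeasurable_condExp hGint hCind_int
    have hfac := aux_factor hm' hG hσ hy ymσ hCI hC
    calc ∫ x in B ∩ C, (P[y | m']) x ∂P
        = ∫ x in B, C.indicator (P[y | m']) x ∂P := (setIntegral_indicator hCmeas).symm
      _ = ∫ x in B, ((P[y | m']) * C.indicator (fun _ => (1:ℝ))) x ∂P := by
          refine integral_congr_ae (ae_restrict_of_ae (Eventually.of_forall fun ω => ?_))
          rw [hind (P[y | m']) ω, Pi.mul_apply]; ring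
      _ = ∫ x in B, (P[(P[y | m']) * C.indicator (fun _ => (1:ℝ)) | m']) x ∂P :=
          (setIntegral_condExp hm' hGint hB).symm
      _ = ∫ x in B, ((P[y | m']) * P[C.indicator (fun _ => (1:ℝ)) | m']) x ∂P :=
          integral_congr_ae (ae_restrict_of_ae hpull)
      _ = ∫ x in B, (P[fun ω => C.indicator (fun _ => (1:ℝ)) ω * y ω | m']) x ∂P := by
          refine integral_congr_ae (ae_restrict_of_ae ?_)
          filter_upwards [hfac] with ω h2
          rw [h2, Pi.mul_apply]; ring
      _ = ∫ x in B, (fun ω => C.indicator (fun _ => (1:ℝ)) ω * y ω) x ∂P :=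
          setIntegral_condExp hm' hFint hB
      _ = ∫ x in B, C.indicator y x ∂P := by
          refine integral_congr_ae (ae_restrict_of_ae (Eventually.of_forall fun ω => ?_))
          rw [hind y ω]
      _ = ∫ x in B ∩ C, y x ∂P := setIntegral_indicator hCmeas
  · intro t htm ht
    have htΩ : MeasurableSet[mΩ] t := hM t htm
    have h1 := integral_add_compl htΩ (integrable_condExp (μ := P) (m := m') (f := y))
    have h2 := integral_add_compl htΩ hy
    have h3 : ∫ x, (P[y | m']) x ∂P = ∫ x, y x ∂P := integral_condExp hm'
    linarith
  · intro g hdis hmeas hQ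
    rw [integral_iUnion (fun i => hM _ (hmeas i)) hdis integrable_condExp.integrableOn,
      integral_iUnion (fun i => hM _ (hmeas i)) hdis hy.integrableOn]
    exact tsum_congr hQ
end Aux

/-- Type II covariates. If for every `t` the future covariates `(x_{t+1}, …, x_m)` are
conditionally independent of the current response `y_t` given the current covariate `x_t`
(stated as conditional independence of the σ-algebra `⨆_{s > t} 𝔪 s` generated by the
future covariates and the σ-algebra generated by `y_t`, given `𝔪 t`), and
`E[y_j | x_1, …, x_j] = E[y_j | x_j] = μ_j`, then the type II condition holds:
`E[f_s(x_s) (y_j − μ_j)] = 0` for all `s ≥ j`, where `f_s` is `𝔪 s`-measurable (a function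
of `x_s` only), playing the role of `∂_β μ_s(β)`. -/
theorem typeII_condition_of_condIndep
    {Ω : Type*} {mΩ : MeasurableSpace Ω} [StandardBorelSpace Ω]
    (P : Measure Ω) [IsProbabilityMeasure P]
    (m : ℕ) (𝔪 : Fin m → MeasurableSpace Ω) (h𝔪 : ∀ j, 𝔪 j ≤ mΩ)
    (y : Fin m → Ω → ℝ) (hy : ∀ j, Integrable (y j) P) (hymeas : ∀ j, Measurable (y j))
    (μvec : Fin m → Ω → ℝ) (hμ : ∀ j, μvec j =ᵐ[P] P[y j | 𝔪 j])
    (hCI : ∀ t : Fin m,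
      CondIndep (𝔪 t) (⨆ s : {s : Fin m // t < s}, 𝔪 s)
        (MeasurableSpace.comap (y t) (borel ℝ)) (h𝔪 t) P)
    (f : Fin m → Ω → ℝ) (hf : ∀ s, StronglyMeasurable[𝔪 s] (f s))
    (hint : ∀ s j, Integrable (fun ω => f s ω * (y j ω - μvec j ω)) P) :
    ∀ s j : Fin m, j ≤ s → ∫ ω, f s ω * (y j ω - μvec j ω) ∂P = 0 := by
  intro s j hsj
  classical
  have hG : (⨆ t : {t : Fin m // j < t}, 𝔪 ↑t) ≤ mΩ := iSup_le fun t => h𝔪 t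
  have hσ : MeasurableSpace.comap (y j) (borel ℝ) ≤ mΩ := by
    rw [show borel ℝ = Real.measurableSpace from rfl]
    exact measurable_iff_comap_le.mp (hymeas j)
  have ym₂ : Measurable[MeasurableSpace.comap (y j) (borel ℝ)] (y j) := by
    rw [show (Real.measurableSpace : MeasurableSpace ℝ) = borel ℝ from rfl]
    exact measurable_iff_comap_le.mpr le_rfl
  have hM : 𝔪 j ⊔ (⨆ t : {t : Fin m // j < t}, 𝔪 ↑t) ≤ mΩ := sup_le (h𝔪 j) hG
  have hjoin := condexp_sup_of_condIndep (h𝔪 j) hG hσ (hy j) ym₂ (hCI j)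
  have hfs : StronglyMeasurable[𝔪 j ⊔ (⨆ t : {t : Fin m // j < t}, 𝔪 ↑t)] (f s) := by
    rcases eq_or_lt_of_le hsj with h | h
    · exact (hf s).mono (by rw [← h]; exact le_sup_left)
    · exact (hf s).mono
        ((le_iSup (fun t : {t : Fin m // j < t} => 𝔪 ↑t) ⟨s, h⟩).trans le_sup_right)
  have hgeq : (fun ω => f s ω * (y j ω - μvec j ω))
      =ᵐ[P] (f s) * (y j - P[y j | 𝔪 j]) := by
    filter_upwards [hμ j] with ω h
    simp only [Pi.mul_apply, Pi.sub_apply]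
    rw [h]
  rw [integral_congr_ae hgeq]
  have hgint : Integrable ((f s) * (y j - P[y j | 𝔪 j])) P := (hint s j).congr hgeq
  have hsubint : Integrable (y j - P[y j | 𝔪 j]) P := (hy j).sub integrable_condExp
  have hz : P[y j - P[y j | 𝔪 j] | 𝔪 j ⊔ (⨆ t : {t : Fin m // j < t}, 𝔪 ↑t)] =ᵐ[P] 0 := by
    have hsub := condExp_sub (μ := P)
      (m := 𝔪 j ⊔ (⨆ t : {t : Fin m // j < t}, 𝔪 ↑t)) (hy j)
      (integrable_condExp (m := 𝔪 j) (f := y j))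
    have hproj : P[(P[y j | 𝔪 j]) | 𝔪 j ⊔ (⨆ t : {t : Fin m // j < t}, 𝔪 ↑t)]
        = P[y j | 𝔪 j] :=
      condExp_of_stronglyMeasurable hM
        (stronglyMeasurable_condExp.mono le_sup_left) integrable_condExp
    rw [hproj] at hsub
    filter_upwards [hsub, hjoin] with ω h1 h2
    simp only [Pi.sub_apply, Pi.zero_apply] at h1 h2 ⊢
    rw [h1, ← h2]
    ring
  have hmul := condExp_mul_of_stronglyMeasurable_left hfs hgint hsubint
  have hzero : P[(f s) * (y j - P[y j | 𝔪 j])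
      | 𝔪 j ⊔ (⨆ t : {t : Fin m // j < t}, 𝔪 ↑t)] =ᵐ[P] 0 := by
    filter_upwards [hmul, hz] with ω h1 h2
    rw [h1, Pi.mul_apply, h2]
    simp
  have h5 : ∫ ω, ((f s) * (y j - P[y j | 𝔪 j])) ω ∂P
      = ∫ ω, (P[(f s) * (y j - P[y j | 𝔪 j])
          | 𝔪 j ⊔ (⨆ t : {t : Fin m // j < t}, 𝔪 ↑t)]) ω ∂P :=
    (integral_condExp hM).symm
  rw [h5, integral_congr_ae hzero]
  simp
end

section
/- Under the type II condition E{∂_{β_l} μ_s(β)(y_j − μ_j(β))} = 0 for all s ≥ j, for any lower triangular m×m matrix L the estimating function D(β)^T L [y − μ(β)] has expectation zero, where D(β) is the m×p matrix with rows ∂_β μ_s(β)^T. -/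
open MeasureTheory Matrix

/-- Under the type II condition `E{∂_β μ_s(β)(y_j − μ_j(β))} = 0` for all `s ≥ j`,
for any lower triangular `m×m` matrix `L` the estimating function `D(β)ᵀ L [y − μ(β)]`
has expectation zero, where `D(β)` has rows `∂_β μ_s(β)ᵀ`. -/
theorem typeII_lower_triangular_unbiased
    {Ω : Type*} [MeasurableSpace Ω] (P : Measure Ω) [IsProbabilityMeasure P]
    (m p : ℕ) (y : Ω → (Fin m → ℝ)) (μvec : Fin m → ℝ)
    (Dmat : Matrix (Fin m) (Fin p) ℝ)
    (L : Matrix (Fin m) (Fin m) ℝ) (hL : ∀ j k : Fin m, j < k → L j k = 0)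
    (hint : ∀ j : Fin m, Integrable (fun ω => y ω j) P)
    (htypeII : ∀ (s j : Fin m), j ≤ s → ∀ l : Fin p,
      ∫ ω, Dmat s l * (y ω j - μvec j) ∂P = 0) :
    ∀ l : Fin p, ∫ ω, (Dmat.transpose *ᵥ (L *ᵥ (y ω - μvec))) l ∂P = 0 := by
  intro l
  have hexp : ∀ ω, (Dmat.transpose *ᵥ (L *ᵥ (y ω - μvec))) l
      = ∑ s : Fin m, ∑ j : Fin m, (L s j) * (Dmat s l * (y ω j - μvec j)) := by
    intro ω
    simp only [mulVec, dotProduct, transpose_apply, Pi.sub_apply, Finset.mul_sum]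
    exact Finset.sum_congr rfl fun s _ => Finset.sum_congr rfl fun j _ => by ring
  simp only [hexp]
  have hintj : ∀ (c : ℝ) (j : Fin m),
      Integrable (fun ω => c * (y ω j - μvec j)) P :=
    fun c j => (((hint j).sub (integrable_const _)).const_mul c)
  rw [integral_finset_sum _ (fun s _ => integrable_finset_sum _
      (fun j _ => (hintj (Dmat s l) j).const_mul (L s j)))]
  refine Finset.sum_eq_zero fun s _ => ?_
  rw [integral_finset_sum _ (fun j _ => (hintj (Dmat s l) j).const_mul (L s j))]
  refine Finset.sum_eq_zero fun j _ => ?_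
  rcases le_or_gt j s with h | h
  · rw [integral_const_mul, htypeII s j h l, mul_zero]
  · simp [hL s j h]
end

section
/- Let g_1, ..., g_m ∈ R^r and consider minimizing Σ_{i=1}^m p_i log(m p_i) over probability vectors (p_1, ..., p_m) with p_i ≥ 0, Σ p_i = 1 and Σ p_i g_i = 0. If a minimizer with all p_i > 0 exists, then it has the exponential tilting form p_i = exp(t^T g_i) / Σ_j exp(t^T g_j) for some t ∈ R^r; conversely, any p of this form satisfying the constraint Σ p_i g_i = 0 is a global minimizer (by convexity of the objective). -/
open Matrix

private lemma gibbs_term (c a b : ℝ) (hc : 0 < c) (ha : 0 < a) (hb : 0 ≤ b) :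
    b * Real.log (c * a) + (b - a) ≤ b * Real.log (c * b) := by
  rcases hb.eq_or_lt with h | h
  · simp [← h]; linarith
  · have h1 : Real.log (a / b) ≤ a / b - 1 := Real.log_le_sub_one_of_pos (by positivity)
    have h2 : Real.log (c * b) = Real.log c + Real.log b := Real.log_mul hc.ne' h.ne'
    have h3 : Real.log (c * a) = Real.log c + Real.log a := Real.log_mul hc.ne' ha.ne'
    have h4 : Real.log (a / b) = Real.log a - Real.log b := Real.log_div ha.ne' h.ne'
    have h5 : b * (a / b) = a := by field_simp
    nlinarith [mul_le_mul_of_nonneg_left h1 hb]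

private lemma dot_sum_zero {m r : ℕ} (g : Fin m → (Fin r → ℝ)) (t : Fin r → ℝ)
    (q : Fin m → ℝ) (hq : ∑ i, q i • g i = 0) : ∑ i, q i * (t ⬝ᵥ g i) = 0 := by
  have hk : ∀ k, ∑ i, q i * g i k = 0 := by
    intro k
    simpa [Finset.sum_apply, Pi.smul_apply, smul_eq_mul] using congrFun hq k
  have : ∑ i, q i * (t ⬝ᵥ g i) = ∑ k, t k * ∑ i, q i * g i k := by
    simp only [dotProduct, Finset.mul_sum]
    rw [Finset.sum_comm]
    exact Finset.sum_congr rfl fun k _ => Finset.sum_congr rfl fun i _ => by ring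
  rw [this]
  simp [hk]

private lemma exists_dual {m : ℕ}
    (V : Submodule ℝ (EuclideanSpace ℝ (Fin m))) (w : EuclideanSpace ℝ (Fin m))
    (hw : w ∉ V) : ∃ u : EuclideanSpace ℝ (Fin m),
      (∀ v ∈ V, ∑ i, u i * v i = 0) ∧ 0 < ∑ i, u i * w i := by
  haveI : CompleteSpace V := FiniteDimensional.complete ℝ V
  set pr : EuclideanSpace ℝ (Fin m) := (V.orthogonalProjectionOnto w : EuclideanSpace ℝ (Fin m)) with hpr
  set u : EuclideanSpace ℝ (Fin m) := w - pr with hu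
  have huo : u ∈ Vᗮ := Submodule.sub_starProjection_mem_orthogonal (K := V) w
  have hinner : ∀ v ∈ V, ∑ i, u i * v i = 0 := by
    intro v hv
    have h := (Submodule.mem_orthogonal V u).mp huo v hv
    simpa [PiLp.inner_apply, RCLike.inner_apply, conj_trivial, mul_comm] using h
  refine ⟨u, hinner, ?_⟩
  have hune : u ≠ 0 := by
    intro h0
    exact hw (by
      have : w = pr := by rwa [hu, sub_eq_zero] at h0
      rw [this]; exact (V.orthogonalProjectionOnto w).2)
  have hsplit : ∑ i, u i * w i = ∑ i, u i * pr i + ∑ i, u i * u i := by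
    rw [← Finset.sum_add_distrib]
    refine Finset.sum_congr rfl fun i _ => ?_
    have : w i = pr i + u i := by rw [hu]; simp [PiLp.sub_apply]
    rw [this]; ring
  have h1 : ∑ i, u i * pr i = 0 := hinner pr (V.orthogonalProjectionOnto w).2
  have h2 : ∑ i, u i * u i = ‖u‖ ^ 2 := by
    rw [← real_inner_self_eq_norm_sq]
    simp only [PiLp.inner_apply, RCLike.inner_apply, conj_trivial]
  rw [hsplit, h1, h2]
  have := norm_pos_iff.mpr hune
  positivity

/-- Exponential-tilting duality: if a strictly positive minimizer of `∑ pᵢ log(m pᵢ)` over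
the feasible set `{p : pᵢ ≥ 0, ∑ pᵢ = 1, ∑ pᵢ gᵢ = 0}` exists, it has the exponential
tilting form `pᵢ = exp(tᵀgᵢ)/∑ⱼ exp(tᵀgⱼ)` for some `t ∈ ℝʳ`; conversely, any `p` of this
form satisfying the constraint `∑ pᵢ gᵢ = 0` is a global minimizer. -/
theorem etel_duality (m r : ℕ) (g : Fin m → (Fin r → ℝ)) :
    (∀ p : Fin m → ℝ, (∀ i, 0 < p i) → (∑ i, p i = 1) → (∑ i, p i • g i = 0) →
      (∀ q : Fin m → ℝ, (∀ i, 0 ≤ q i) → (∑ i, q i = 1) → (∑ i, q i • g i = 0) →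
        ∑ i, p i * Real.log (m * p i) ≤ ∑ i, q i * Real.log (m * q i)) →
      ∃ t : Fin r → ℝ, ∀ i, p i = Real.exp (t ⬝ᵥ g i) / ∑ j, Real.exp (t ⬝ᵥ g j)) ∧
    (∀ t : Fin r → ℝ, ∀ p : Fin m → ℝ,
      (∀ i, p i = Real.exp (t ⬝ᵥ g i) / ∑ j, Real.exp (t ⬝ᵥ g j)) →
      (∑ i, p i • g i = 0) →
      ∀ q : Fin m → ℝ, (∀ i, 0 ≤ q i) → (∑ i, q i = 1) → (∑ i, q i • g i = 0) →
        ∑ i, p i * Real.log (m * p i) ≤ ∑ i, q i * Real.log (m * q i)) := by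
  constructor
  · intro p hp hp1 hpcon hmin
    rcases Nat.eq_zero_or_pos m with hm0 | hm
    · subst hm0; simp at hp1
    have hmR : (0:ℝ) < m := by exact_mod_cast hm
    classical
    set w : EuclideanSpace ℝ (Fin m) := WithLp.toLp 2 (fun i => Real.log (m * p i) + 1) with hwdef
    set one : EuclideanSpace ℝ (Fin m) := WithLp.toLp 2 (fun _ => (1:ℝ)) with honedef
    set G : Fin r → EuclideanSpace ℝ (Fin m) := (fun k => WithLp.toLp 2 (fun i => g i k)) with hGdef
    set V : Submodule ℝ (EuclideanSpace ℝ (Fin m)) :=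
      Submodule.span ℝ (insert one (Set.range G)) with hVdef
    have hwV : w ∈ V := by
      by_contra hwV
      obtain ⟨u, hperp, hpos⟩ := exists_dual V w hwV
      -- properties of u
      have hu1 : ∑ i, u i = 0 := by
        have := hperp one (Submodule.subset_span (Set.mem_insert _ _))
        simpa [honedef] using this
      have huk : ∀ k, ∑ i, u i * g i k = 0 := by
        intro k
        have := hperp (G k) (Submodule.subset_span (Set.mem_insert_of_mem _ ⟨k, rfl⟩))
        simpa [hGdef] using this
      -- derivative of the objective along direction -u at p
      set D : ℝ := ∑ i, (Real.log (m * p i) + 1) * (-u i) with hDdef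
      have hD : D < 0 := by
        have : D = -∑ i, u i * w i := by
          rw [hDdef, ← Finset.sum_neg_distrib]
          exact Finset.sum_congr rfl fun i _ => by simp [hwdef]; ring
        rw [this]
        linarith
      set φ : ℝ → ℝ := fun ε => ∑ i, (p i - ε * u i) * Real.log (m * (p i - ε * u i)) with hφdef
      have hderiv : HasDerivAt φ D 0 := by
        apply HasDerivAt.fun_sum
        intro i _
        have h1 : HasDerivAt (fun x : ℝ => p i - x * u i) (-u i) 0 := by
          simpa using ((hasDerivAt_id (0:ℝ)).mul_const (u i)).const_sub (p i)
        have h2 : HasDerivAt (fun y : ℝ => y * Real.log ((m:ℝ) * y)) (Real.log (m * p i) + 1) (p i) := by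
          have hl : HasDerivAt (fun y : ℝ => Real.log ((m:ℝ) * y)) (1 / p i) (p i) := by
            have := (Real.hasDerivAt_log (mul_pos hmR (hp i)).ne').comp (p i)
              ((hasDerivAt_id (p i)).const_mul (m:ℝ))
            refine this.congr_deriv ?_
            · field_simp [(hp i).ne']
          have := (hasDerivAt_id (p i)).mul hl
          refine this.congr_deriv ?_
          simp [(hp i).ne']
        have h2' : HasDerivAt (fun y : ℝ => y * Real.log ((m:ℝ) * y)) (Real.log (m * p i) + 1)
            ((fun x : ℝ => p i - x * u i) 0) := by simpa using h2
        have := h2'.comp 0 h1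
        simpa [Function.comp_def] using this
      -- eventually positivity and slope negative on right nhds of 0
      have hpos_ev : ∀ᶠ ε in nhds (0:ℝ), ∀ i, 0 < p i - ε * u i := by
        rw [Filter.eventually_all]
        intro i
        have hc : Continuous (fun ε : ℝ => p i - ε * u i) := by continuity
        have : Filter.Tendsto (fun ε : ℝ => p i - ε * u i) (nhds 0) (nhds (p i)) := by
          have := hc.tendsto 0
          simpa using this
        exact this.eventually (eventually_gt_nhds (hp i))
      have hslope : ∀ᶠ ε in nhdsWithin (0:ℝ) (Set.Ioi 0), φ ε < φ 0 := by
        have h1 := hasDerivAt_iff_tendsto_slope.mp hderiv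
        have h2 : ∀ᶠ ε in nhdsWithin (0:ℝ) {(0:ℝ)}ᶜ, slope φ 0 ε < 0 :=
          h1.eventually (eventually_lt_nhds hD)
        have h3 : nhdsWithin (0:ℝ) (Set.Ioi 0) ≤ nhdsWithin (0:ℝ) {(0:ℝ)}ᶜ :=
          nhdsWithin_mono _ (fun x hx => ne_of_gt hx)
        filter_upwards [h3 h2, self_mem_nhdsWithin] with ε hε hε0
        have hε0' : (0:ℝ) < ε := hε0
        rw [slope_def_field] at hε
        have := div_neg_iff.mp (by simpa using hε)
        rcases this with ⟨h, h'⟩ | ⟨h, h'⟩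
        · linarith
        · linarith
      have := ((hpos_ev.filter_mono nhdsWithin_le_nhds).and hslope).exists
      obtain ⟨ε, hεpos, hεlt⟩ := ((hpos_ev.filter_mono nhdsWithin_le_nhds).and hslope).exists
      -- q := p - ε u is feasible
      set q : Fin m → ℝ := fun i => p i - ε * u i with hqdef
      have hq0 : ∀ i, 0 ≤ q i := fun i => (hεpos i).le
      have hq1 : ∑ i, q i = 1 := by
        rw [hqdef]
        rw [Finset.sum_sub_distrib, ← Finset.mul_sum, hu1, hp1]
        ring
      have hqcon : ∑ i, q i • g i = 0 := by
        funext k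
        have h1 : (∑ i, q i • g i) k = ∑ i, q i * g i k := by
          simp [Finset.sum_apply, Pi.smul_apply, smul_eq_mul]
        have h2 : (∑ i, p i • g i) k = ∑ i, p i * g i k := by
          simp [Finset.sum_apply, Pi.smul_apply, smul_eq_mul]
        have hpk : ∑ i, p i * g i k = 0 := by rw [← h2, hpcon]; simp
        rw [h1]
        have : ∑ i, q i * g i k = ∑ i, p i * g i k - ε * ∑ i, u i * g i k := by
          rw [Finset.mul_sum, ← Finset.sum_sub_distrib]
          exact Finset.sum_congr rfl fun i _ => by rw [hqdef]; ring
        rw [this, hpk, huk k]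
        simp
      have hle := hmin q hq0 hq1 hqcon
      have hφ0 : φ 0 = ∑ i, p i * Real.log (m * p i) := by simp [hφdef]
      have hφε : φ ε = ∑ i, q i * Real.log (m * q i) := rfl
      rw [hφ0, hφε] at hεlt
      linarith
    -- extract coefficients
    rw [hVdef, Submodule.mem_span_insert] at hwV
    obtain ⟨c, z, hz, hwz⟩ := hwV
    rw [Submodule.mem_span_range_iff_exists_fun] at hz
    obtain ⟨t, ht⟩ := hz
    refine ⟨t, fun i => ?_⟩
    have hzap : ∀ j, z j = t ⬝ᵥ g j := by
      intro j
      have h := congrArg (EuclideanSpace.proj (𝕜 := ℝ) j) ht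
      rw [map_sum] at h
      simpa [hGdef, dotProduct, PiLp.proj_apply, smul_eq_mul] using h.symm
    have hform : ∀ j, p j = Real.exp (t ⬝ᵥ g j) * (Real.exp (c - 1) / m) := by
      intro j
      have hj : Real.log (m * p j) + 1 = c + t ⬝ᵥ g j := by
        have h : w j = (c • one + z) j := by rw [hwz]
        have h2 : (c • one + z) j = c + z j := by
          simp [honedef, Pi.add_apply, Pi.smul_apply, smul_eq_mul]
        rw [h2, hzap j] at h
        exact h
      have hmp : (0:ℝ) < m * p j := mul_pos hmR (hp j)
      have hexp : (m:ℝ) * p j = Real.exp (t ⬝ᵥ g j + (c - 1)) := by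
        rw [← Real.exp_log hmp]
        congr 1
        linarith
      rw [Real.exp_add] at hexp
      field_simp
      linarith [hexp]
    have hZ : ∑ j, Real.exp (t ⬝ᵥ g j) * (Real.exp (c - 1) / m) = 1 := by
      have h := Finset.sum_congr rfl (fun j (_ : j ∈ Finset.univ) => (hform j).symm)
      rw [h]
      exact hp1
    have hZsum : (∑ j, Real.exp (t ⬝ᵥ g j)) * (Real.exp (c - 1) / m) = 1 := by
      rw [Finset.sum_mul]; exact hZ
    have hZpos : (0:ℝ) < ∑ j, Real.exp (t ⬝ᵥ g j) := by
      haveI : Nonempty (Fin m) := ⟨⟨0, hm⟩⟩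
      exact Finset.sum_pos (fun j _ => Real.exp_pos _) Finset.univ_nonempty
    have hC : Real.exp (c - 1) / m = 1 / ∑ j, Real.exp (t ⬝ᵥ g j) :=
      eq_one_div_of_mul_eq_one_left (by rw [mul_comm] at hZsum; exact hZsum)
    rw [hform i, hC, mul_one_div]
  · intro t p hpdef hpcon q hq0 hq1 hqcon
    rcases Nat.eq_zero_or_pos m with hm0 | hm
    · subst hm0; simp at hq1
    have hmR : (0:ℝ) < m := by exact_mod_cast hm
    haveI : Nonempty (Fin m) := ⟨⟨0, hm⟩⟩
    set Z : ℝ := ∑ j, Real.exp (t ⬝ᵥ g j) with hZdef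
    have hZ : 0 < Z := Finset.sum_pos (fun j _ => Real.exp_pos _) Finset.univ_nonempty
    have hppos : ∀ i, 0 < p i := fun i => by rw [hpdef i]; positivity
    have hp1 : ∑ i, p i = 1 := by
      calc ∑ i, p i = ∑ i, Real.exp (t ⬝ᵥ g i) / Z := Finset.sum_congr rfl fun i _ => hpdef i
      _ = Z / Z := by rw [← Finset.sum_div]
      _ = 1 := div_self hZ.ne'
    have hlog : ∀ i, Real.log (m * p i) = Real.log m + t ⬝ᵥ g i - Real.log Z := by
      intro i
      rw [hpdef i, Real.log_mul hmR.ne' (by positivity),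
        Real.log_div (Real.exp_pos _).ne' hZ.ne', Real.log_exp]
      ring
    have hdp : ∑ i, p i * (t ⬝ᵥ g i) = 0 := dot_sum_zero g t p hpcon
    have hdq : ∑ i, q i * (t ⬝ᵥ g i) = 0 := dot_sum_zero g t q hqcon
    have key : ∀ (a : Fin m → ℝ), (∑ i, a i = 1) → (∑ i, a i * (t ⬝ᵥ g i) = 0) →
        ∑ i, a i * Real.log (m * p i) = Real.log m - Real.log Z := by
      intro a ha1 hda
      calc ∑ i, a i * Real.log (m * p i)
          = ∑ i, a i * (Real.log m + t ⬝ᵥ g i - Real.log Z) :=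
            Finset.sum_congr rfl fun i _ => by rw [hlog i]
        _ = Real.log m * (∑ i, a i) + (∑ i, a i * (t ⬝ᵥ g i)) - Real.log Z * (∑ i, a i) := by
            rw [Finset.mul_sum, Finset.mul_sum, ← Finset.sum_add_distrib, ← Finset.sum_sub_distrib]
            exact Finset.sum_congr rfl fun i _ => by ring
        _ = Real.log m - Real.log Z := by rw [ha1, hda]; ring
    have hval := key p hp1 hdp
    have hvalq := key q hq1 hdq
    have hbound := Finset.sum_le_sum (fun i (_ : i ∈ Finset.univ) =>
      gibbs_term m (p i) (q i) hmR (hppos i) (hq0 i))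
    rw [Finset.sum_add_distrib, Finset.sum_sub_distrib, hq1, hp1, hvalq] at hbound
    linarith [hval, hbound]
end

section
/- The function t ↦ −Σ_{i=1}^{m} exp(−t^T g_i) on R^r (with g_1, ..., g_m ∈ R^r fixed) is concave, and if 0 lies in the interior of the convex hull of {g_1, ..., g_m}, the supremum is attained at a point t̂ satisfying Σ_i exp(−t̂^T g_i) g_i = 0. -/
open Matrix

/-- dot product with fixed right vector as a continuous linear map -/
noncomputable def dotCLM {r : ℕ} (w : Fin r → ℝ) : (Fin r → ℝ) →L[ℝ] ℝ :=
  LinearMap.toContinuousLinearMap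
    { toFun := fun v => v ⬝ᵥ w
      map_add' := fun a b => add_dotProduct a b w
      map_smul' := fun c a => smul_dotProduct c a w }

@[simp] lemma dotCLM_apply {r : ℕ} (w v : Fin r → ℝ) : dotCLM w v = v ⬝ᵥ w := rfl

lemma etel_concave (m r : ℕ) (g : Fin m → (Fin r → ℝ)) :
    ConcaveOn ℝ Set.univ (fun t : Fin r → ℝ => -∑ i, Real.exp (-(t ⬝ᵥ g i))) := by
  have h : ConvexOn ℝ Set.univ (fun t : Fin r → ℝ => ∑ i, Real.exp (-(t ⬝ᵥ g i))) := by
    have : ∀ i : Fin m, ConvexOn ℝ (Set.univ : Set (Fin r → ℝ))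
        (fun t => Real.exp (-(t ⬝ᵥ g i))) := by
      intro i
      have h1 : ConvexOn ℝ Set.univ (fun t : Fin r → ℝ => Real.exp ((-(dotCLM (g i))) t)) :=
        (convexOn_exp.comp_linearMap (-(dotCLM (g i)) : (Fin r → ℝ) →L[ℝ] ℝ).toLinearMap).subset
          (by simp) convex_univ
      simpa using h1
    classical
    induction (Finset.univ : Finset (Fin m)) using Finset.induction with
    | empty => simpa using convexOn_const 0 convex_univ
    | insert _ _ hx ih =>
        simp only [Finset.sum_insert hx]
        exact (this _).add ih
  simpa [ConcaveOn] using h.neg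

lemma etel_deriv (m r : ℕ) (g : Fin m → (Fin r → ℝ)) (t : Fin r → ℝ) :
    HasFDerivAt (fun t : Fin r → ℝ => -∑ i, Real.exp (-(t ⬝ᵥ g i)))
      (∑ i, Real.exp (-(t ⬝ᵥ g i)) • dotCLM (g i)) t := by
  have h : ∀ i : Fin m, HasFDerivAt (fun t : Fin r → ℝ => Real.exp (-(t ⬝ᵥ g i)))
      (Real.exp (-(t ⬝ᵥ g i)) • (-(dotCLM (g i)))) t := by
    intro i
    have h0 : HasFDerivAt (fun t : Fin r → ℝ => -(t ⬝ᵥ g i)) (-(dotCLM (g i))) t :=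
      ((dotCLM (g i)).hasFDerivAt).neg
    exact h0.exp
  have hs := HasFDerivAt.fun_sum (fun i (_ : i ∈ Finset.univ) => h i)
  have := hs.fun_neg
  refine this.congr_fderiv ?_
  rw [← Finset.sum_neg_distrib]
  congr 1; funext i; simp [smul_neg]

lemma etel_attained (m r : ℕ) (g : Fin m → (Fin r → ℝ))
    (hi : (0 : Fin r → ℝ) ∈ interior (convexHull ℝ (Set.range g))) :
    ∃ that : Fin r → ℝ,
        IsMaxOn (fun t : Fin r → ℝ => -∑ i, Real.exp (-(t ⬝ᵥ g i))) Set.univ that ∧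
        ∑ i, Real.exp (-(that ⬝ᵥ g i)) • g i = 0 := by
  classical
  set F : (Fin r → ℝ) → ℝ := fun t => -∑ i, Real.exp (-(t ⬝ᵥ g i)) with hF
  -- extract a ball inside the convex hull
  obtain ⟨ε, hε, hball⟩ := Metric.mem_nhds_iff.1 (mem_interior_iff_mem_nhds.1 hi)
  -- m > 0
  have h0hull : (0 : Fin r → ℝ) ∈ convexHull ℝ (Set.range g) := interior_subset hi
  have hne : (Set.range g).Nonempty := by
    by_contra h
    rw [Set.not_nonempty_iff_eq_empty] at h
    rw [h, convexHull_empty] at h0hull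
    exact h0hull
  have hm : 0 < m := by
    obtain ⟨x, i, _⟩ := hne
    exact i.pos
  haveI : Nonempty (Fin m) := ⟨⟨0, hm⟩⟩
  have hmne : (Finset.univ : Finset (Fin m)).Nonempty := Finset.univ_nonempty
  -- continuity
  have hcont : Continuous (fun t : Fin r → ℝ => ∑ i, Real.exp (-(t ⬝ᵥ g i))) := by
    apply continuous_finset_sum
    intro i _
    exact Real.continuous_exp.comp ((dotCLM (g i)).continuous.neg)
  -- the sublevel set
  set S : Set (Fin r → ℝ) := {t | ∑ i, Real.exp (-(t ⬝ᵥ g i)) ≤ m} with hS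
  have h0S : (0 : Fin r → ℝ) ∈ S := by
    simp [hS, zero_dotProduct]
  have hSclosed : IsClosed S := isClosed_le hcont continuous_const
  -- boundedness of S
  have hSbound : ∀ t ∈ S, ‖t‖ ≤ (2 / ε) * Real.log m := by
    intro t htS
    rcases eq_or_ne t 0 with h | h
    · subst h
      simp only [norm_zero]
      have : (1:ℝ) ≤ m := by exact_mod_cast hm
      positivity
    · have htn : 0 < ‖t‖ := norm_pos_iff.2 h
      -- key point: p := -(ε/2) • ‖t‖⁻¹ • t belongs to the hull
      haveI : Nonempty (Fin r) := by
        by_contra hr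
        exact h (funext fun j => absurd ⟨j⟩ hr)
      set p : Fin r → ℝ := (-(ε/2)) • (‖t‖⁻¹ • t) with hp
      have hpnorm : ‖p‖ = ε / 2 := by
        rw [hp, norm_smul, norm_smul, norm_inv, norm_norm, inv_mul_cancel₀ htn.ne', mul_one,
          norm_neg, Real.norm_eq_abs, abs_of_pos (half_pos hε)]
      have hpball : p ∈ Metric.ball (0 : Fin r → ℝ) ε := by
        rw [Metric.mem_ball, dist_zero_right, hpnorm]
        linarith
      have hphull : p ∈ convexHull ℝ (Set.range g) := hball hpball
      -- min of linear functional over the hull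
      set A : ℝ := Finset.univ.inf' hmne (fun i => t ⬝ᵥ g i) with hA
      have hhalf : convexHull ℝ (Set.range g) ⊆ {w | A ≤ t ⬝ᵥ w} := by
        apply convexHull_min
        · rintro w ⟨i, rfl⟩
          exact Finset.inf'_le (fun i => t ⬝ᵥ g i) (Finset.mem_univ i)
        · exact convex_halfSpace_ge
            ⟨fun a b => dotProduct_add t a b,
             fun c a => dotProduct_smul c t a⟩ A
      have hAp : A ≤ t ⬝ᵥ p := hhalf hphull
      -- compute t ⬝ᵥ p
      have hdp : t ⬝ᵥ p = (-(ε/2)) * (‖t‖⁻¹ * (t ⬝ᵥ t)) := by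
        simp [hp, dotProduct_smul, smul_eq_mul]
      have hself : ‖t‖^2 ≤ t ⬝ᵥ t := by
        obtain ⟨j, hj⟩ : ∃ j, ∀ k, |t k| ≤ |t j| := Finite.exists_max (fun k => |t k|)
        have h1 : ‖t‖ ≤ |t j| := (pi_norm_le_iff_of_nonneg (abs_nonneg _)).2 fun k => by
          simpa [Real.norm_eq_abs] using hj k
        calc ‖t‖^2 ≤ |t j|^2 := by nlinarith [norm_nonneg t]
        _ = t j ^ 2 := sq_abs _
        _ ≤ ∑ k, t k ^ 2 :=
            Finset.single_le_sum (f := fun k => t k ^ 2) (fun k _ => sq_nonneg _)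
              (Finset.mem_univ j)
        _ = t ⬝ᵥ t := by simp [dotProduct, sq]
      have hkey : A ≤ -(ε/2) * ‖t‖ := by
        have h2 : ‖t‖⁻¹ * (t ⬝ᵥ t) ≥ ‖t‖ := by
          rw [ge_iff_le, le_inv_mul_iff₀ htn]
          nlinarith
        calc A ≤ t ⬝ᵥ p := hAp
        _ = (-(ε/2)) * (‖t‖⁻¹ * (t ⬝ᵥ t)) := hdp
        _ ≤ -(ε/2) * ‖t‖ := by nlinarith
      -- so one exponential is big
      obtain ⟨i0, _, hi0⟩ := Finset.exists_mem_eq_inf' hmne (fun i => t ⬝ᵥ g i)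
      have hbig : Real.exp ((ε/2) * ‖t‖) ≤ ∑ i, Real.exp (-(t ⬝ᵥ g i)) := by
        calc Real.exp ((ε/2) * ‖t‖) ≤ Real.exp (-(t ⬝ᵥ g i0)) := by
              apply Real.exp_le_exp.2
              have h3 : t ⬝ᵥ g i0 = A := by rw [hA, hi0]
              linarith
        _ ≤ ∑ i, Real.exp (-(t ⬝ᵥ g i)) :=
              Finset.single_le_sum (f := fun i => Real.exp (-(t ⬝ᵥ g i)))
                (fun i _ => (Real.exp_pos _).le) (Finset.mem_univ i0)
      have htS' : ∑ i, Real.exp (-(t ⬝ᵥ g i)) ≤ (m : ℝ) := htS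
      have hle : Real.exp ((ε/2) * ‖t‖) ≤ (m : ℝ) := le_trans hbig htS'
      have hlog : (ε/2) * ‖t‖ ≤ Real.log m := by
        have := Real.log_le_log (Real.exp_pos _) hle
        rwa [Real.log_exp] at this
      rw [div_mul_eq_mul_div, le_div_iff₀ hε, mul_comm]
      linarith
  have hSb : Bornology.IsBounded S :=
    (Metric.isBounded_iff_subset_closedBall 0).2 ⟨(2/ε) * Real.log m, fun t ht => by
      simpa [Metric.mem_closedBall, dist_zero_right] using hSbound t ht⟩
  have hScompact : IsCompact S := Metric.isCompact_of_isClosed_isBounded hSclosed hSb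
  -- attain max on S
  obtain ⟨that, hthatS, hmaxS⟩ := hScompact.exists_isMaxOn ⟨0, h0S⟩ (hcont.neg.continuousOn)
  refine ⟨that, ?_, ?_⟩
  · intro t _
    rcases le_or_gt (∑ i, Real.exp (-(t ⬝ᵥ g i))) m with hts | hts
    · exact hmaxS hts
    · have h1 : F t < F 0 := by
        simp only [hF]
        have : ∑ i, Real.exp (-((0:Fin r → ℝ) ⬝ᵥ g i)) = m := by
          simp [zero_dotProduct]
        rw [neg_lt_neg_iff, this]
        exact hts
      have h2 : F 0 ≤ F that := hmaxS h0S
      simp only [Set.mem_setOf_eq]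
      calc F t ≤ F 0 := h1.le
      _ ≤ F that := h2
  · -- first order condition
    have hlocal : IsLocalMax F that := by
      apply Filter.Eventually.of_forall
      intro t
      rcases le_or_gt (∑ i, Real.exp (-(t ⬝ᵥ g i))) m with hts | hts
      · exact hmaxS hts
      · have h2 : F 0 ≤ F that := hmaxS h0S
        have : ∑ i, Real.exp (-((0:Fin r → ℝ) ⬝ᵥ g i)) = m := by
          simp [zero_dotProduct]
        simp only [hF] at h2 ⊢
        rw [this] at h2
        linarith
    have hD := hlocal.hasFDerivAt_eq_zero (etel_deriv m r g that)
    funext j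
    have := congrArg (fun (L : (Fin r → ℝ) →L[ℝ] ℝ) => L (Pi.single j 1)) hD
    simp only [ContinuousLinearMap.sum_apply, ContinuousLinearMap.smul_apply, dotCLM_apply,
      ContinuousLinearMap.zero_apply, single_dotProduct, one_mul, smul_eq_mul] at this
    simpa [Finset.sum_apply, Pi.smul_apply, smul_eq_mul] using this

/-- The dual objective `F(t) = −∑ᵢ exp(−tᵀgᵢ)` is concave on `ℝʳ`, and if `0` lies in the
interior of the convex hull of `{g₁, …, g_m}`, the supremum of `F` is attained at some `t̂`
satisfying the first-order condition `∑ᵢ exp(−t̂ᵀgᵢ) gᵢ = 0`. -/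
theorem etel_dual_concave_attained (m r : ℕ) (g : Fin m → (Fin r → ℝ)) :
    ConcaveOn ℝ Set.univ (fun t : Fin r → ℝ => -∑ i, Real.exp (-(t ⬝ᵥ g i))) ∧
    ((0 : Fin r → ℝ) ∈ interior (convexHull ℝ (Set.range g)) →
      ∃ that : Fin r → ℝ,
        IsMaxOn (fun t : Fin r → ℝ => -∑ i, Real.exp (-(t ⬝ᵥ g i))) Set.univ that ∧
        ∑ i, Real.exp (-(that ⬝ᵥ g i)) • g i = 0) :=
  ⟨etel_concave m r g, etel_attained m r g⟩
end
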